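/- For natural numbers L and N with N ≥ 1, and each n ≥ 0, the identity ∑_i 2^{L-i}·C(L,i)·C(N-1, n-i) = ∑_k C(L,k)·C(N+k-1, n) holds, where sums range over all integers and out-of-range binomial coefficients vanish. -/

import Mathlib

/-- The binomial coefficient `C(a,b)` for a natural number `a` and an integer `b`,
taken to be `0` when `b < 0` (and automatically `0` when `b > a`). -/
def ichoose (a : ℕ) (b : ℤ) : ℕ :=
  if 0 ≤ b then a.choose b.toNat else 0

lemma sum_choose_mul_choose (L b : ℕ) :
    ∑ k ∈ Finset.range (L + 1), Nat.choose L k * Nat.choose k b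
      = Nat.choose L b * 2 ^ (L - b) := by
  by_cases hb : b ≤ L
  · have h1 : ∑ k ∈ Finset.range (L + 1), Nat.choose L k * Nat.choose k b
        = ∑ k ∈ Finset.Ico b (L + 1), Nat.choose L k * Nat.choose k b := by
      rw [Finset.range_eq_Ico]
      refine (Finset.sum_subset (Finset.Ico_subset_Ico (Nat.zero_le _) le_rfl) ?_).symm
      intro k hk hk'
      simp only [Finset.mem_Ico] at hk hk'
      have : k < b := by omega
      rw [Nat.choose_eq_zero_of_lt this, mul_zero]
    rw [h1, Finset.sum_Ico_eq_sum_range]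
    have h2 : L + 1 - b = (L - b) + 1 := by omega
    rw [h2]
    have h3 : ∀ j ∈ Finset.range (L - b + 1),
        Nat.choose L (b + j) * Nat.choose (b + j) b
          = Nat.choose L b * Nat.choose (L - b) j := by
      intro j hj
      simp only [Finset.mem_range] at hj
      have hkn : b + j ≤ L := by omega
      have := Nat.choose_mul (n := L) (Nat.le_add_right b j)
      simpa using this
    rw [Finset.sum_congr rfl h3, ← Finset.mul_sum, Nat.sum_range_choose]
  · push_neg at hb
    rw [Nat.choose_eq_zero_of_lt hb, zero_mul]
    refine Finset.sum_eq_zero fun k hk => ?_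
    simp only [Finset.mem_range] at hk
    have : k < b := by omega
    rw [Nat.choose_eq_zero_of_lt this, mul_zero]

lemma vandermonde_shift (M k n : ℕ) :
    Nat.choose (M + k) n
      = ∑ i ∈ Finset.range (n + 1), Nat.choose M (n - i) * Nat.choose k i := by
  rw [Nat.add_choose_eq, Finset.Nat.sum_antidiagonal_eq_sum_range_succ_mk]
  rw [← Finset.sum_range_reflect]
  refine Finset.sum_congr rfl fun i hi => ?_
  simp only [Finset.mem_range] at hi
  have h1 : n + 1 - 1 - i = n - i := by omega
  have h2 : n - (n - i) = i := by omega
  rw [h1, h2]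

/-- For natural numbers `L`, `N` with `N ≥ 1`, and each `n ≥ 0`:
`∑_i 2^{L-i}·C(L,i)·C(N-1, n-i) = ∑_k C(L,k)·C(N+k-1, n)`.
Sums range over all integers with out-of-range binomial coefficients vanishing;
since `C(L,·)` vanishes outside `[0,L]` it suffices to sum over `0 ≤ i,k ≤ L`. -/
theorem dim_boundaries_identity (L N n : ℕ) (hN : 1 ≤ N) :
    (∑ i ∈ Finset.range (L + 1),
        2 ^ (L - i) * Nat.choose L i * ichoose (N - 1) ((n : ℤ) - (i : ℤ)))
      = ∑ k ∈ Finset.range (L + 1), Nat.choose L k * Nat.choose (N + k - 1) n := by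
  set g : ℕ → ℕ := fun i =>
    2 ^ (L - i) * Nat.choose L i * (if i ≤ n then (N - 1).choose (n - i) else 0) with hg
  have hichoose : ∀ i : ℕ, ichoose (N - 1) ((n : ℤ) - (i : ℤ))
      = (if i ≤ n then (N - 1).choose (n - i) else 0) := by
    intro i
    unfold ichoose
    by_cases h : i ≤ n
    · rw [if_pos (by exact_mod_cast sub_nonneg.mpr (Int.ofNat_le.mpr h)), if_pos h]
      congr 1
      omega
    · rw [if_neg (by omega), if_neg h]
  have hext : ∀ m : ℕ, (∀ i, m < i → g i = 0) →
      ∑ i ∈ Finset.range (m + 1), g i = ∑ i ∈ Finset.range (L + n + 1), g i := by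
    intro m hm
    by_cases hle : m + 1 ≤ L + n + 1
    · refine Finset.sum_subset (Finset.range_subset_range.mpr hle) ?_
      intro i _ hi
      simp only [Finset.mem_range] at hi
      exact hm i (by omega)
    · push_neg at hle
      refine (Finset.sum_subset (Finset.range_subset_range.mpr (by omega)) ?_).symm
      intro i _ hi
      simp only [Finset.mem_range] at hi
      have : L < i := by omega
      simp only [hg, Nat.choose_eq_zero_of_lt this, mul_zero, zero_mul]
  have hLHS : (∑ i ∈ Finset.range (L + 1),
      2 ^ (L - i) * Nat.choose L i * ichoose (N - 1) ((n : ℤ) - (i : ℤ)))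
      = ∑ i ∈ Finset.range (L + n + 1), g i := by
    rw [← hext L (by
      intro i hi
      simp only [hg, Nat.choose_eq_zero_of_lt hi, mul_zero, zero_mul])]
    exact Finset.sum_congr rfl fun i _ => by rw [hichoose]
  have hRHS : ∑ k ∈ Finset.range (L + 1), Nat.choose L k * Nat.choose (N + k - 1) n
      = ∑ i ∈ Finset.range (L + n + 1), g i := by
    have hvd : ∀ k : ℕ, Nat.choose (N + k - 1) n
        = ∑ i ∈ Finset.range (n + 1), Nat.choose (N - 1) (n - i) * Nat.choose k i := by
      intro k
      have h1 : N + k - 1 = (N - 1) + k := by omega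
      rw [h1, vandermonde_shift]
    calc ∑ k ∈ Finset.range (L + 1), Nat.choose L k * Nat.choose (N + k - 1) n
        = ∑ k ∈ Finset.range (L + 1), ∑ i ∈ Finset.range (n + 1),
            Nat.choose L k * (Nat.choose (N - 1) (n - i) * Nat.choose k i) := by
          refine Finset.sum_congr rfl fun k _ => ?_
          rw [hvd, Finset.mul_sum]
      _ = ∑ i ∈ Finset.range (n + 1), ∑ k ∈ Finset.range (L + 1),
            Nat.choose L k * (Nat.choose (N - 1) (n - i) * Nat.choose k i) := by
          rw [Finset.sum_comm]
      _ = ∑ i ∈ Finset.range (n + 1),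
            Nat.choose (N - 1) (n - i) * (Nat.choose L i * 2 ^ (L - i)) := by
          refine Finset.sum_congr rfl fun i _ => ?_
          rw [← sum_choose_mul_choose L i, Finset.mul_sum]
          exact Finset.sum_congr rfl fun k _ => by ring
      _ = ∑ i ∈ Finset.range (n + 1), g i := by
          refine Finset.sum_congr rfl fun i hi => ?_
          simp only [Finset.mem_range] at hi
          simp only [hg, if_pos (by omega : i ≤ n)]
          ring
      _ = ∑ i ∈ Finset.range (L + n + 1), g i := by
          refine hext n fun i hi => ?_
          simp only [hg, if_neg (by omega : ¬ i ≤ n), mul_zero]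
  rw [hLHS, hRHS]
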